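/- Let G be a countable group acting transitively on a countable set X with finite stabilizers, and suppose G acts by measure-preserving maps on a probability space (Ω, F, P). Suppose for each n there are G-equivariant random equivalence relations Rₙ on X with almost surely finite classes such that P[(x,z) ∈ Rₙ] → 1 for all x, z ∈ X. Then G is amenable. -/

import Mathlib

open MeasureTheory Filter

set_option linter.unusedSectionVars false

section Aux

variable {G : Type*} {X : Type*} [Group G] [Countable X] [MulAction G X]
variable {Ω : Type*} [MeasurableSpace Ω]

/-- The event that the `R n`-class of `x` is exactly the finite set `s`. -/
def Ev (R : ℕ → Ω → X → X → Prop) (n : ℕ) (x : X) (s : Finset X) : Set Ω :=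
  {ω | ∀ z, R n ω x z ↔ z ∈ s}

noncomputable def avg (φ : X → ℝ) (s : Finset X) : ℝ := (∑ z ∈ s, φ z) / s.card

noncomputable def mSeq (P : Measure Ω) (R : ℕ → Ω → X → X → Prop) (n : ℕ) (x : X)
    (φ : X → ℝ) : ℝ :=
  ∑' s : Finset X, avg φ s * (P (Ev R n x s)).toReal

variable {P : Measure Ω} [IsProbabilityMeasure P] {R : ℕ → Ω → X → X → Prop}

lemma measEv (hmeas : ∀ (n : ℕ) (x z : X), MeasurableSet {ω | R n ω x z})
    (n : ℕ) (x : X) (s : Finset X) : MeasurableSet (Ev R n x s) := by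
  have h : Ev R n x s = ⋂ z : X, {ω | R n ω x z ↔ z ∈ s} := by
    ext ω; simp [Ev, Set.mem_iInter]
  rw [h]
  refine MeasurableSet.iInter fun z => ?_
  by_cases hz : z ∈ s
  · simpa [hz] using hmeas n x z
  · have he : {ω | R n ω x z ↔ z ∈ s} = {ω | R n ω x z}ᶜ := by ext ω; simp [hz]
    rw [he]; exact (hmeas n x z).compl

lemma disjEv (n : ℕ) (x : X) :
    Pairwise (Function.onFun Disjoint fun s : Finset X => Ev R n x s) := by
  intro s t hst
  rw [Function.onFun, Set.disjoint_left]
  intro ω hs ht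
  apply hst
  ext z
  rw [← hs z, ht z]

lemma sumEv (hmeas : ∀ (n : ℕ) (x z : X), MeasurableSet {ω | R n ω x z})
    (n : ℕ) (x : X) (hfin : ∀ᵐ ω ∂P, {z | R n ω x z}.Finite) :
    ∑' s : Finset X, P (Ev R n x s) = 1 := by
  rw [← measure_iUnion (disjEv n x) (measEv hmeas n x)]
  have hsub : (⋃ s : Finset X, Ev R n x s)ᶜ ⊆ {ω | ¬ {z | R n ω x z}.Finite} := by
    intro ω hω hfinω
    exact hω (Set.mem_iUnion.2 ⟨hfinω.toFinset, fun z => by simp [Set.Finite.mem_toFinset]⟩)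
  have hnull : P ((⋃ s : Finset X, Ev R n x s)ᶜ) = 0 :=
    measure_mono_null hsub (by simpa [ae_iff] using hfin)
  have := prob_compl_eq_zero_iff (μ := P)
    (MeasurableSet.iUnion (fun s => measEv hmeas n x s))
  exact this.mp hnull

lemma summable_pEv (hmeas : ∀ (n : ℕ) (x z : X), MeasurableSet {ω | R n ω x z})
    (n : ℕ) (x : X) :
    Summable (fun s : Finset X => (P (Ev R n x s)).toReal) :=
  ENNReal.summable_toReal (by
    rw [← measure_iUnion (disjEv n x) (measEv hmeas n x)]; exact measure_ne_top P _)

lemma tsum_pEv (hmeas : ∀ (n : ℕ) (x z : X), MeasurableSet {ω | R n ω x z})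
    (n : ℕ) (x : X) (hfin : ∀ᵐ ω ∂P, {z | R n ω x z}.Finite) :
    ∑' s : Finset X, (P (Ev R n x s)).toReal = 1 := by
  rw [← ENNReal.tsum_toReal_eq (fun s => measure_ne_top P _), sumEv hmeas n x hfin,
    ENNReal.toReal_one]

lemma abs_avg_le {φ : X → ℝ} {M : ℝ} (hM : 0 ≤ M) (hφ : ∀ z, |φ z| ≤ M)
    (s : Finset X) : |avg φ s| ≤ M := by
  rcases Nat.eq_zero_or_pos s.card with hc | hc
  · simp [avg, hc, hM]
  · have hcpos : (0:ℝ) < s.card := by exact_mod_cast hc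
    rw [avg, abs_div, abs_of_pos hcpos, div_le_iff₀ hcpos]
    calc |∑ z ∈ s, φ z| ≤ ∑ z ∈ s, |φ z| := Finset.abs_sum_le_sum_abs _ _
      _ ≤ ∑ _z ∈ s, M := Finset.sum_le_sum fun z _ => hφ z
      _ = M * s.card := by rw [Finset.sum_const, nsmul_eq_mul, mul_comm]

lemma summable_term {φ : X → ℝ} {M : ℝ} (hM : 0 ≤ M) (hφ : ∀ z, |φ z| ≤ M)
    {q : Finset X → ℝ} (hq0 : ∀ s, 0 ≤ q s) (hq : Summable q) :
    Summable (fun s : Finset X => avg φ s * q s) := by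
  refine Summable.of_abs ?_
  refine Summable.of_nonneg_of_le (fun s => abs_nonneg _) (fun s => ?_) (hq.mul_left M)
  rw [abs_mul, abs_of_nonneg (hq0 s)]
  exact mul_le_mul_of_nonneg_right (abs_avg_le hM hφ s) (hq0 s)

lemma abs_tsum_term_le {φ : X → ℝ} {M C : ℝ} (hM : 0 ≤ M) (hφ : ∀ z, |φ z| ≤ M)
    {q : Finset X → ℝ} (hq0 : ∀ s, 0 ≤ q s) (hq : Summable q)
    (hqC : ∑' s, q s ≤ C) :
    |∑' s : Finset X, avg φ s * q s| ≤ M * C := by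
  have hsum := summable_term hM hφ hq0 hq
  have h1 : |∑' s : Finset X, avg φ s * q s| ≤ ∑' s : Finset X, |avg φ s * q s| := by
    have := norm_tsum_le_tsum_norm (f := fun s : Finset X => avg φ s * q s)
      (by simpa only [Real.norm_eq_abs] using hsum.abs)
    simpa only [Real.norm_eq_abs] using this
  refine h1.trans ?_
  have h2 : ∑' s : Finset X, |avg φ s * q s| ≤ ∑' s, M * q s := by
    refine Summable.tsum_le_tsum (fun s => ?_) hsum.abs (hq.mul_left M)
    rw [abs_mul, abs_of_nonneg (hq0 s)]
    exact mul_le_mul_of_nonneg_right (abs_avg_le hM hφ s) (hq0 s)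
  refine h2.trans ?_
  rw [tsum_mul_left]
  exact mul_le_mul_of_nonneg_left hqC hM

lemma abs_mSeq_le (hmeas : ∀ (n : ℕ) (x z : X), MeasurableSet {ω | R n ω x z})
    {φ : X → ℝ} {M : ℝ} (hM : 0 ≤ M) (hφ : ∀ z, |φ z| ≤ M)
    (n : ℕ) (x : X) (hfin : ∀ᵐ ω ∂P, {z | R n ω x z}.Finite) :
    |mSeq P R n x φ| ≤ M := by
  have := abs_tsum_term_le (C := 1) hM hφ (fun s => ENNReal.toReal_nonneg)
    (summable_pEv hmeas n x) (le_of_eq (tsum_pEv hmeas n x hfin))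
  simpa [mSeq] using this

lemma mSeq_nonneg {φ : X → ℝ} (hφ : ∀ z, 0 ≤ φ z) (n : ℕ) (x : X) :
    0 ≤ mSeq P R n x φ := by
  refine tsum_nonneg fun s => mul_nonneg ?_ ENNReal.toReal_nonneg
  exact div_nonneg (Finset.sum_nonneg fun z _ => hφ z) (Nat.cast_nonneg _)

lemma mSeq_one (hmeas : ∀ (n : ℕ) (x z : X), MeasurableSet {ω | R n ω x z})
    (heq : ∀ (n : ℕ) (ω : Ω), Equivalence (R n ω))
    (n : ℕ) (x : X) (hfin : ∀ᵐ ω ∂P, {z | R n ω x z}.Finite) :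
    mSeq P R n x (fun _ => 1) = 1 := by
  have hterm : ∀ s : Finset X,
      avg (fun _ => (1:ℝ)) s * (P (Ev R n x s)).toReal = (P (Ev R n x s)).toReal := by
    intro s
    rcases Set.eq_empty_or_nonempty (Ev R n x s) with he | ⟨ω, hω⟩
    · simp [he]
    · have hxs : x ∈ s := (hω x).mp ((heq n ω).refl x)
      have hc : (0:ℝ) < s.card := by
        exact_mod_cast Finset.card_pos.mpr ⟨x, hxs⟩
      rw [avg]
      rw [Finset.sum_const, nsmul_eq_mul, mul_one, div_self (ne_of_gt hc), one_mul]
  rw [mSeq]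
  calc ∑' s : Finset X, avg (fun _ => (1:ℝ)) s * (P (Ev R n x s)).toReal
      = ∑' s : Finset X, (P (Ev R n x s)).toReal := by exact tsum_congr hterm
    _ = 1 := tsum_pEv hmeas n x hfin

lemma mSeq_add (hmeas : ∀ (n : ℕ) (x z : X), MeasurableSet {ω | R n ω x z})
    {φ ψ : X → ℝ} {M : ℝ} (hM : 0 ≤ M) (hφ : ∀ z, |φ z| ≤ M) (hψ : ∀ z, |ψ z| ≤ M)
    (n : ℕ) (x : X) :
    mSeq P R n x (fun z => φ z + ψ z) = mSeq P R n x φ + mSeq P R n x ψ := by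
  have havg : ∀ s : Finset X, avg (fun z => φ z + ψ z) s = avg φ s + avg ψ s := by
    intro s
    rw [avg, avg, avg, ← add_div, ← Finset.sum_add_distrib]
  rw [mSeq, mSeq, mSeq]
  rw [← Summable.tsum_add (summable_term hM hφ (fun s => ENNReal.toReal_nonneg) (summable_pEv hmeas n x))
    (summable_term hM hψ (fun s => ENNReal.toReal_nonneg) (summable_pEv hmeas n x))]
  exact tsum_congr fun s => by rw [havg, add_mul]

lemma mSeq_equivariant [MulAction G Ω]
    (hmeas : ∀ (n : ℕ) (x z : X), MeasurableSet {ω | R n ω x z})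
    (hmp : ∀ g : G, MeasurePreserving (fun ω => g • ω) P P)
    (heqv : ∀ (n : ℕ) (g : G) (ω : Ω) (x₁ x₂ : X),
      R n ω x₁ x₂ ↔ R n (g • ω) (g • x₁) (g • x₂))
    (g : G) (n : ℕ) (x : X) (φ : X → ℝ) :
    mSeq P R n x (fun z => φ (g • z)) = mSeq P R n (g • x) φ := by
  have e : Finset X ≃ Finset X := (MulAction.toPerm g : Equiv.Perm X).finsetCongr
  rw [mSeq, mSeq,
    ← ((MulAction.toPerm g : Equiv.Perm X).finsetCongr).tsum_eq
      (fun t => avg φ t * (P (Ev R n (g • x) t)).toReal)]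
  refine tsum_congr fun s => ?_
  have hes : (MulAction.toPerm g : Equiv.Perm X).finsetCongr s
      = s.map (MulAction.toPerm g : Equiv.Perm X).toEmbedding := Equiv.finsetCongr_apply _ _
  have havg : avg φ ((MulAction.toPerm g : Equiv.Perm X).finsetCongr s)
      = avg (fun z => φ (g • z)) s := by
    rw [hes, avg, avg, Finset.sum_map, Finset.card_map]
    rfl
  have hset : Ev R n x s
      = (fun ω => g • ω) ⁻¹' Ev R n (g • x) ((MulAction.toPerm g : Equiv.Perm X).finsetCongr s) := by
    ext ω
    simp only [Ev, Set.mem_preimage, Set.mem_setOf_eq, hes]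
    constructor
    · intro h z
      have hz : z = g • (g⁻¹ • z) := (smul_inv_smul g z).symm
      rw [hz, ← heqv n g ω x (g⁻¹ • z)]
      simpa [Finset.mem_map_equiv] using h (g⁻¹ • z)
    · intro h z
      rw [heqv n g ω x z, h (g • z)]
      simp [Finset.mem_map_equiv]
  have hP : P (Ev R n x s)
      = P (Ev R n (g • x) ((MulAction.toPerm g : Equiv.Perm X).finsetCongr s)) := by
    rw [hset]
    exact (hmp g).measure_preimage
      (measEv hmeas n (g • x) _).nullMeasurableSet
  rw [havg, hP]

lemma mSeq_close (hmeas : ∀ (n : ℕ) (x z : X), MeasurableSet {ω | R n ω x z})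
    (heq : ∀ (n : ℕ) (ω : Ω), Equivalence (R n ω))
    {φ : X → ℝ} {M : ℝ} (hM : 0 ≤ M) (hφ : ∀ z, |φ z| ≤ M)
    (n : ℕ) (x y : X) :
    |mSeq P R n x φ - mSeq P R n y φ| ≤ 2 * M * (P {ω | R n ω x y}ᶜ).toReal := by
  set D := {ω | R n ω x y} with hD
  have hDm : MeasurableSet D := hmeas n x y
  have key : ∀ s : Finset X, Ev R n x s ∩ D = Ev R n y s ∩ D := by
    intro s
    ext ω
    simp only [Ev, Set.mem_inter_iff, Set.mem_setOf_eq, hD]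
    constructor
    · rintro ⟨h, hxy⟩
      refine ⟨fun z => ?_, hxy⟩
      rw [← h z]
      exact ⟨fun hyz => (heq n ω).trans hxy hyz,
        fun hxz => (heq n ω).trans ((heq n ω).symm hxy) hxz⟩
    · rintro ⟨h, hxy⟩
      refine ⟨fun z => ?_, hxy⟩
      rw [← h z]
      exact ⟨fun hxz => (heq n ω).trans ((heq n ω).symm hxy) hxz,
        fun hyz => (heq n ω).trans hxy hyz⟩
  set px : Finset X → ℝ := fun s => (P (Ev R n x s ∩ Dᶜ)).toReal with hpx
  set py : Finset X → ℝ := fun s => (P (Ev R n y s ∩ Dᶜ)).toReal with hpy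
  have hsplit : ∀ u : X, ∀ s, (P (Ev R n u s)).toReal
      = (P (Ev R n u s ∩ D)).toReal + (P (Ev R n u s ∩ Dᶜ)).toReal := by
    intro u s
    rw [← ENNReal.toReal_add (measure_ne_top P _) (measure_ne_top P _)]
    congr 1
    rw [← measure_inter_add_diff (Ev R n u s) hDm, Set.diff_eq]
  have hdiff : ∀ s, (P (Ev R n x s)).toReal - (P (Ev R n y s)).toReal = px s - py s := by
    intro s
    rw [hsplit x s, hsplit y s, key s]
    ring
  have hq0 : ∀ u : X, ∀ s : Finset X, (0:ℝ) ≤ (P (Ev R n u s ∩ Dᶜ)).toReal :=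
    fun u s => ENNReal.toReal_nonneg
  have hqle : ∀ u : X, ∀ s : Finset X,
      (P (Ev R n u s ∩ Dᶜ)).toReal ≤ (P (Ev R n u s)).toReal := fun u s =>
    ENNReal.toReal_mono (measure_ne_top P _) (measure_mono Set.inter_subset_left)
  have hqsum : ∀ u : X, Summable (fun s : Finset X => (P (Ev R n u s ∩ Dᶜ)).toReal) :=
    fun u => Summable.of_nonneg_of_le (hq0 u) (hqle u) (summable_pEv hmeas n u)
  have hqtot : ∀ u : X, ∑' s : Finset X, (P (Ev R n u s ∩ Dᶜ)).toReal ≤ (P Dᶜ).toReal := by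
    intro u
    rw [← ENNReal.tsum_toReal_eq (fun s => measure_ne_top P _)]
    refine ENNReal.toReal_mono (measure_ne_top P _) ?_
    rw [← measure_iUnion (fun s t hst => Set.disjoint_left.mpr fun ω hω hω' =>
        Set.disjoint_left.mp (disjEv n u hst) hω.1 hω'.1)
      (fun s => (measEv hmeas n u s).inter hDm.compl)]
    exact measure_mono (Set.iUnion_subset fun s => Set.inter_subset_right)
  have hsx := summable_term hM hφ (fun s => ENNReal.toReal_nonneg)
    (summable_pEv (P := P) hmeas n x)
  have hsy := summable_term hM hφ (fun s => ENNReal.toReal_nonneg)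
    (summable_pEv (P := P) hmeas n y)
  have hsx' := summable_term hM hφ (hq0 x) (hqsum x)
  have hsy' := summable_term hM hφ (hq0 y) (hqsum y)
  have hmain : mSeq P R n x φ - mSeq P R n y φ
      = (∑' s : Finset X, avg φ s * px s) - ∑' s : Finset X, avg φ s * py s := by
    rw [mSeq, mSeq, ← Summable.tsum_sub hsx hsy, ← Summable.tsum_sub hsx' hsy']
    refine tsum_congr fun s => ?_
    rw [← mul_sub, ← mul_sub, hdiff s]
  rw [hmain]
  have hx' := abs_tsum_term_le hM hφ (hq0 x) (hqsum x) (hqtot x)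
  have hy' := abs_tsum_term_le hM hφ (hq0 y) (hqsum y) (hqtot y)
  have habs : ∀ a b : ℝ, |a - b| ≤ |a| + |b| := fun a b => by
    rw [sub_eq_add_neg]
    exact (abs_add_le a (-b)).trans (by rw [abs_neg])
  calc |(∑' s : Finset X, avg φ s * px s) - ∑' s : Finset X, avg φ s * py s|
      ≤ |∑' s : Finset X, avg φ s * px s| + |∑' s : Finset X, avg φ s * py s| := habs _ _
    _ ≤ M * (P Dᶜ).toReal + M * (P Dᶜ).toReal := add_le_add hx' hy'
    _ = 2 * M * (P Dᶜ).toReal := by ring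

end Aux

section Psi

variable {G X : Type*} [Group G] [MulAction G X]

/-- Average of the indicator of `A ⊆ G` over the fiber `{g : g • x₀ = x}`,
normalized by the cardinality of the stabilizer of `x₀`. -/
noncomputable def psi (x₀ : X) (hfib : ∀ x : X, {g : G | g • x₀ = x}.Finite)
    (A : Set G) (x : X) : ℝ :=
  (∑ g ∈ (hfib x).toFinset, Set.indicator A (fun _ => (1:ℝ)) g)
    / (hfib x₀).toFinset.card

lemma card_fib [MulAction.IsPretransitive G X] (x₀ : X)
    (hfib : ∀ x : X, {g : G | g • x₀ = x}.Finite) (x : X) :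
    (hfib x).toFinset.card = (hfib x₀).toFinset.card := by
  obtain ⟨gx, hgx⟩ := MulAction.exists_smul_eq G x₀ x
  refine (Finset.card_bij (fun g _ => gx * g) ?_ ?_ ?_).symm
  · intro g hg
    rw [Set.Finite.mem_toFinset] at hg ⊢
    rw [Set.mem_setOf_eq, mul_smul, hg, hgx]
  · intro a _ b _ hab
    exact mul_left_cancel hab
  · intro b hb
    rw [Set.Finite.mem_toFinset, Set.mem_setOf_eq] at hb
    refine ⟨gx⁻¹ * b, ?_, by group⟩
    rw [Set.Finite.mem_toFinset, Set.mem_setOf_eq, mul_smul, hb, ← hgx, inv_smul_smul]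

lemma card_fib_pos (x₀ : X) (hfib : ∀ x : X, {g : G | g • x₀ = x}.Finite) :
    0 < (hfib x₀).toFinset.card := by
  refine Finset.card_pos.mpr ⟨1, ?_⟩
  rw [Set.Finite.mem_toFinset, Set.mem_setOf_eq, one_smul]

lemma psi_nonneg (x₀ : X) (hfib : ∀ x : X, {g : G | g • x₀ = x}.Finite)
    (A : Set G) (x : X) : 0 ≤ psi x₀ hfib A x := by
  refine div_nonneg (Finset.sum_nonneg fun g _ => ?_) (Nat.cast_nonneg _)
  exact Set.indicator_nonneg (fun _ _ => zero_le_one) g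

lemma psi_le_one [MulAction.IsPretransitive G X] (x₀ : X)
    (hfib : ∀ x : X, {g : G | g • x₀ = x}.Finite) (A : Set G) (x : X) :
    psi x₀ hfib A x ≤ 1 := by
  have hk : (0:ℝ) < (hfib x₀).toFinset.card := by
    exact_mod_cast card_fib_pos x₀ hfib
  rw [psi, div_le_one hk]
  calc (∑ g ∈ (hfib x).toFinset, Set.indicator A (fun _ => (1:ℝ)) g)
      ≤ ∑ _g ∈ (hfib x).toFinset, 1 := by
        refine Finset.sum_le_sum fun g _ => ?_
        by_cases hg : g ∈ A <;> simp [Set.indicator_apply, hg]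
    _ = ((hfib x).toFinset.card : ℝ) := by rw [Finset.sum_const, nsmul_eq_mul, mul_one]
    _ = ((hfib x₀).toFinset.card : ℝ) := by rw [card_fib x₀ hfib x]

lemma psi_abs_le [MulAction.IsPretransitive G X] (x₀ : X)
    (hfib : ∀ x : X, {g : G | g • x₀ = x}.Finite) (A : Set G) (x : X) :
    |psi x₀ hfib A x| ≤ 1 :=
  abs_le.mpr ⟨by linarith [psi_nonneg x₀ hfib A x], psi_le_one x₀ hfib A x⟩

lemma psi_univ [MulAction.IsPretransitive G X] (x₀ : X)
    (hfib : ∀ x : X, {g : G | g • x₀ = x}.Finite) (x : X) :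
    psi x₀ hfib Set.univ x = 1 := by
  have hk : (0:ℝ) < (hfib x₀).toFinset.card := by
    exact_mod_cast card_fib_pos x₀ hfib
  rw [psi]
  have : (∑ g ∈ (hfib x).toFinset, Set.indicator (Set.univ : Set G) (fun _ => (1:ℝ)) g)
      = ((hfib x₀).toFinset.card : ℝ) := by
    rw [← card_fib x₀ hfib x]
    simp [Set.indicator_apply]
  rw [this, div_self (ne_of_gt hk)]

lemma psi_add (x₀ : X) (hfib : ∀ x : X, {g : G | g • x₀ = x}.Finite)
    {A B : Set G} (hAB : Disjoint A B) (x : X) :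
    psi x₀ hfib (A ∪ B) x = psi x₀ hfib A x + psi x₀ hfib B x := by
  rw [psi, psi, psi, ← add_div, ← Finset.sum_add_distrib]
  congr 1
  refine Finset.sum_congr rfl fun g _ => ?_
  rw [Set.indicator_union_of_disjoint hAB]

lemma psi_smul (x₀ : X) (hfib : ∀ x : X, {g : G | g • x₀ = x}.Finite)
    (h : G) (A : Set G) (x : X) :
    psi x₀ hfib ((h * ·) '' A) x = psi x₀ hfib A (h⁻¹ • x) := by
  rw [psi, psi]
  congr 1
  refine Finset.sum_bij (fun g _ => h⁻¹ * g) ?_ ?_ ?_ ?_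
  · intro g hg
    rw [Set.Finite.mem_toFinset, Set.mem_setOf_eq] at hg ⊢
    rw [mul_smul, hg]
  · intro a _ b _ hab
    exact mul_left_cancel hab
  · intro b hb
    rw [Set.Finite.mem_toFinset, Set.mem_setOf_eq] at hb
    refine ⟨h * b, ?_, by group⟩
    rw [Set.Finite.mem_toFinset, Set.mem_setOf_eq, mul_smul, hb, smul_inv_smul]
  · intro g _
    have hmem : g ∈ (h * ·) '' A ↔ h⁻¹ * g ∈ A := by
      constructor
      · rintro ⟨a, haA, rfl⟩
        simpa using haA
      · intro ha
        exact ⟨h⁻¹ * g, ha, by group⟩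
    by_cases hg : h⁻¹ * g ∈ A
    · rw [Set.indicator_of_mem (hmem.mpr hg), Set.indicator_of_mem hg]
    · rw [Set.indicator_of_notMem (fun hc => hg (hmem.mp hc)),
        Set.indicator_of_notMem hg]

end Psi

/-- A group is amenable if it carries a left-invariant finitely additive
probability measure defined on all subsets (equivalently, an invariant mean on
`ℓ^∞(G)`). -/
def IsAmenable (G : Type*) [Group G] : Prop :=
  ∃ m : Set G → ℝ,
    (∀ A : Set G, 0 ≤ m A) ∧ m Set.univ = 1 ∧
    (∀ A B : Set G, Disjoint A B → m (A ∪ B) = m A + m B) ∧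
    (∀ (g : G) (A : Set G), m ((g * ·) '' A) = m A)

/-- Discrete case of Lemma 3.1 (Adams–Lyons criterion): a countable group acting
transitively with finite stabilizers on a countable set, admitting equivariant
random equivalence relations with a.s. finite classes and
`P[(x,z) ∈ Rₙ] → 1`, is amenable. -/
theorem stmt_12 {G X : Type*} [Group G] [Countable G] [Countable X] [Nonempty X]
    [MulAction G X] [MulAction.IsPretransitive G X]
    (hstab : ∀ x : X, {g : G | g • x = x}.Finite)
    {Ω : Type*} [MeasurableSpace Ω] (P : Measure Ω) [IsProbabilityMeasure P]
    [MulAction G Ω]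
    (hmp : ∀ g : G, MeasurePreserving (fun ω => g • ω) P P)
    (R : ℕ → Ω → X → X → Prop)
    (hmeas : ∀ (n : ℕ) (x z : X), MeasurableSet {ω | R n ω x z})
    (heqv : ∀ (n : ℕ) (g : G) (ω : Ω) (x₁ x₂ : X),
      R n ω x₁ x₂ ↔ R n (g • ω) (g • x₁) (g • x₂))
    (heq : ∀ (n : ℕ) (ω : Ω), Equivalence (R n ω))
    (hfin : ∀ (n : ℕ) (x : X), ∀ᵐ ω ∂P, {z | R n ω x z}.Finite)
    (hlim : ∀ x z : X,
      Filter.Tendsto (fun n => P {ω | R n ω x z}) Filter.atTop (nhds 1)) :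
    IsAmenable G := by
  obtain ⟨x₀⟩ := (inferInstance : Nonempty X)
  -- each fiber of the orbit map g ↦ g • x₀ is finite
  have hfib : ∀ x : X, {g : G | g • x₀ = x}.Finite := by
    intro x
    obtain ⟨gx, hgx⟩ := MulAction.exists_smul_eq G x₀ x
    refine Set.Finite.subset ((hstab x₀).image (fun k => gx * k)) ?_
    intro g hg
    rw [Set.mem_setOf_eq] at hg
    refine ⟨gx⁻¹ * g, ?_, by group⟩
    rw [Set.mem_setOf_eq, mul_smul, hg, ← hgx, inv_smul_smul]
  -- the ultrafilter along which we take limits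
  let U : Ultrafilter ℕ := Ultrafilter.of Filter.atTop
  have hUle : (U : Filter ℕ) ≤ Filter.atTop := Ultrafilter.of_le _
  -- existence of limits along the ultrafilter
  have hex : ∀ A : Set G, ∃ a : ℝ,
      Filter.Tendsto (fun n => mSeq P R n x₀ (psi x₀ hfib A)) (U : Filter ℕ) (nhds a) := by
    intro A
    have hmem : (Ultrafilter.map (fun n => mSeq P R n x₀ (psi x₀ hfib A)) U : Filter ℝ)
        ≤ Filter.principal (Set.Icc (-1:ℝ) 1) := by
      rw [Ultrafilter.coe_map, Filter.le_principal_iff, Filter.mem_map]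
      refine Filter.univ_mem' fun n => ?_
      have := abs_mSeq_le (P := P) hmeas zero_le_one (psi_abs_le x₀ hfib A) n x₀ (hfin n x₀)
      exact Set.mem_Icc.mpr (abs_le.mp this)
    obtain ⟨a, _, ha⟩ := (isCompact_Icc (a := (-1:ℝ)) (b := 1)).ultrafilter_le_nhds
      (Ultrafilter.map (fun n => mSeq P R n x₀ (psi x₀ hfib A)) U) hmem
    refine ⟨a, ?_⟩
    rwa [Filter.Tendsto, ← Ultrafilter.coe_map]
  choose m hm using hex
  refine ⟨m, ?_, ?_, ?_, ?_⟩
  · -- nonnegativity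
    intro A
    refine ge_of_tendsto' (hm A) fun n => ?_
    exact mSeq_nonneg (P := P) (R := R) (fun z => psi_nonneg x₀ hfib A z) n x₀
  · -- total mass one
    have h1 : Filter.Tendsto (fun n => mSeq P R n x₀ (psi x₀ hfib Set.univ))
        (U : Filter ℕ) (nhds 1) := by
      have hconst : (fun n => mSeq P R n x₀ (psi x₀ hfib Set.univ)) = fun _ => (1:ℝ) := by
        funext n
        have huniv : psi x₀ hfib (Set.univ : Set G) = fun _ => (1:ℝ) :=
          funext (psi_univ x₀ hfib)
        rw [huniv]
        exact mSeq_one hmeas heq n x₀ (hfin n x₀)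
      rw [hconst]
      exact tendsto_const_nhds
    exact tendsto_nhds_unique (hm Set.univ) h1
  · -- finite additivity
    intro A B hAB
    have h1 : ∀ n, mSeq P R n x₀ (psi x₀ hfib (A ∪ B))
        = mSeq P R n x₀ (psi x₀ hfib A) + mSeq P R n x₀ (psi x₀ hfib B) := by
      intro n
      have hfun : psi x₀ hfib (A ∪ B)
          = fun x => psi x₀ hfib A x + psi x₀ hfib B x :=
        funext (psi_add x₀ hfib hAB)
      rw [hfun]
      exact mSeq_add hmeas zero_le_one (psi_abs_le x₀ hfib A) (psi_abs_le x₀ hfib B) n x₀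
    have h2 : Filter.Tendsto (fun n => mSeq P R n x₀ (psi x₀ hfib (A ∪ B)))
        (U : Filter ℕ) (nhds (m A + m B)) := by
      simp only [h1]
      exact (hm A).add (hm B)
    exact tendsto_nhds_unique (hm (A ∪ B)) h2
  · -- invariance
    intro g A
    have h1 : ∀ n, mSeq P R n x₀ (psi x₀ hfib ((g * ·) '' A))
        = mSeq P R n (g⁻¹ • x₀) (psi x₀ hfib A) := by
      intro n
      have hfun : psi x₀ hfib ((g * ·) '' A)
          = fun x => psi x₀ hfib A (g⁻¹ • x) :=
        funext (psi_smul x₀ hfib g A)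
      rw [hfun]
      exact mSeq_equivariant hmeas hmp heqv g⁻¹ n x₀ (psi x₀ hfib A)
    -- the error term tends to zero
    have hb : Filter.Tendsto
        (fun n => 2 * 1 * (P {ω | R n ω (g⁻¹ • x₀) x₀}ᶜ).toReal) Filter.atTop (nhds 0) := by
      have hP := hlim (g⁻¹ • x₀) x₀
      have hcompl : ∀ n, (P {ω | R n ω (g⁻¹ • x₀) x₀}ᶜ).toReal
          = 1 - (P {ω | R n ω (g⁻¹ • x₀) x₀}).toReal := by
        intro n
        rw [measure_compl (hmeas n _ _) (measure_ne_top P _), measure_univ,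
          ENNReal.toReal_sub_of_le prob_le_one ENNReal.one_ne_top, ENNReal.toReal_one]
      simp only [hcompl]
      have htr : Filter.Tendsto (fun n => (P {ω | R n ω (g⁻¹ • x₀) x₀}).toReal)
          Filter.atTop (nhds 1) := by
        have := (ENNReal.tendsto_toReal ENNReal.one_ne_top).comp hP
        simpa [Function.comp_def] using this
      have hfinal := (tendsto_const_nhds (x := (2:ℝ) * 1) (f := Filter.atTop)).mul
        ((tendsto_const_nhds (x := (1:ℝ)) (f := Filter.atTop)).sub htr)
      simpa using hfinal
    have hdiff : Filter.Tendsto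
        (fun n => mSeq P R n x₀ (psi x₀ hfib ((g * ·) '' A)) - mSeq P R n x₀ (psi x₀ hfib A))
        (U : Filter ℕ) (nhds 0) := by
      refine (squeeze_zero_norm (fun n => ?_) hb).mono_left hUle
      rw [Real.norm_eq_abs, h1 n]
      exact mSeq_close hmeas heq zero_le_one (psi_abs_le x₀ hfib A) n (g⁻¹ • x₀) x₀
    have h2 : Filter.Tendsto
        (fun n => mSeq P R n x₀ (psi x₀ hfib ((g * ·) '' A)) - mSeq P R n x₀ (psi x₀ hfib A))
        (U : Filter ℕ) (nhds (m ((g * ·) '' A) - m A)) := (hm _).sub (hm A)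
    have h3 := tendsto_nhds_unique h2 hdiff
    linarith
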